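/- Let Q and Q₀ be J-normal projections on a Krein space (H,J) with ‖Q − Q₀‖ < 1/(2(1 + ‖Q₀‖)). Set P = Q(I − Q^#) and P₀ = Q₀(I − Q₀^#). Then ‖P − P₀‖ ≤ 2(1 + ‖Q₀‖)‖Q − Q₀‖ < 1, and consequently the orthogonal projections onto the isotropic parts R(Q)° = R(P) and R(Q₀)° = R(P₀) satisfy ‖P_{R(Q)°} − P_{R(Q₀)°}‖ < 1; in particular dim R(Q)° = dim R(Q₀)°. -/

import Mathlib

open ContinuousLinearMap
open scoped ComplexInnerProductSpace

variable {H : Type*} [NormedAddCommGroup H] [InnerProductSpace ℂ H] [CompleteSpace H]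

/-- The `J`-adjoint `T^# = J T* J`. -/
noncomputable def sharp (J T : H →L[ℂ] H) : H →L[ℂ] H :=
  J ∘L (ContinuousLinearMap.adjoint T) ∘L J

private lemma idem_mul {A : Type*} [Ring A] {q s : A} (hq : q*q = q) (hs : s*s = s)
    (hc : q*s = s*q) : (q*(1-s))*(q*(1-s)) = q*(1-s) := by
  have e1 : q*s*q = q*s := by rw [hc, mul_assoc, hq, ← hc]
  have e2 : q*s*(q*s) = q*s := by rw [← mul_assoc, e1, mul_assoc, hs]
  calc (q*(1-s))*(q*(1-s)) = q*q - (q*q)*s - q*s*q + q*s*(q*s) := by noncomm_ring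
    _ = q - q*s - q*s + q*s := by rw [hq, e1, e2]
    _ = q*(1-s) := by noncomm_ring

private lemma sharp_ring {A : Type*} [Ring A] {j t : A} (hj : j*j = 1) (ht : t*t = t) :
    (j*(t*j))*(j*(t*j)) = j*(t*j) := by
  calc (j*(t*j))*(j*(t*j)) = j*t*(j*j)*t*j := by noncomm_ring
    _ = j*(t*t)*j := by rw [hj]; noncomm_ring
    _ = j*(t*j) := by rw [ht]; noncomm_ring

set_option maxHeartbeats 1000000

/-- If `Q, Q₀` are `J`-normal projections with `‖Q − Q₀‖ < 1/(2(1+‖Q₀‖))`, then for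
`P = Q(I − Q^#)`, `P₀ = Q₀(I − Q₀^#)`: `‖P − P₀‖ ≤ 2(1+‖Q₀‖)‖Q − Q₀‖ < 1`, the orthogonal
projections onto the isotropic parts `R(P)`, `R(P₀)` are at distance `< 1`, and the isotropic
parts have the same dimension. -/
theorem stmt9 (J Q Q₀ : H →L[ℂ] H)
    (hJsa : ContinuousLinearMap.adjoint J = J) (hJ2 : J ∘L J = 1)
    (hQ : Q ∘L Q = Q) (hQn : Q ∘L sharp J Q = sharp J Q ∘L Q)
    (hQ₀ : Q₀ ∘L Q₀ = Q₀) (hQ₀n : Q₀ ∘L sharp J Q₀ = sharp J Q₀ ∘L Q₀)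
    (hclose : ‖Q - Q₀‖ < 1 / (2 * (1 + ‖Q₀‖)))
    (P P₀ : H →L[ℂ] H)
    (hP : P = Q ∘L (1 - sharp J Q)) (hP₀ : P₀ = Q₀ ∘L (1 - sharp J Q₀))
    (R R₀ : H →L[ℂ] H)
    (hR : R ∘L R = R) (hRsa : IsSelfAdjoint R) (hRr : LinearMap.range (R : H →ₗ[ℂ] H) = LinearMap.range (P : H →ₗ[ℂ] H))
    (hR₀ : R₀ ∘L R₀ = R₀) (hR₀sa : IsSelfAdjoint R₀)
    (hR₀r : LinearMap.range (R₀ : H →ₗ[ℂ] H) = LinearMap.range (P₀ : H →ₗ[ℂ] H)) :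
    ‖P - P₀‖ ≤ 2 * (1 + ‖Q₀‖) * ‖Q - Q₀‖ ∧ 2 * (1 + ‖Q₀‖) * ‖Q - Q₀‖ < 1 ∧
    ‖R - R₀‖ < 1 ∧
    Module.rank ℂ (LinearMap.range (P : H →ₗ[ℂ] H)) = Module.rank ℂ (LinearMap.range (P₀ : H →ₗ[ℂ] H)) := by
  -- rewrite compositions as ring multiplication
  rw [← ContinuousLinearMap.mul_def] at hJ2 hQ hQ₀ hR hR₀
  rw [← ContinuousLinearMap.mul_def] at hQn hQ₀n hP hP₀
  rw [← ContinuousLinearMap.mul_def] at hQn hQ₀n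
  -- basic facts about J
  have hJJ : ∀ x : H, J (J x) = x := by
    intro x
    have := congrArg (fun f : H →L[ℂ] H => f x) hJ2
    simpa using this
  have hJiso : ∀ x : H, ‖J x‖ = ‖x‖ := by
    intro x
    have h1 : ⟪J x, J x⟫ = ⟪x, x⟫ := by
      have := ContinuousLinearMap.adjoint_inner_left J (J x) x
      rw [hJsa, hJJ x] at this
      exact this
    rw [norm_eq_sqrt_re_inner (𝕜 := ℂ) (J x), norm_eq_sqrt_re_inner (𝕜 := ℂ) x, h1]
  -- norm of sharp
  have hsharp_norm : ∀ T : H →L[ℂ] H, ‖sharp J T‖ ≤ ‖T‖ := by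
    intro T
    refine ContinuousLinearMap.opNorm_le_bound _ (norm_nonneg T) fun x => ?_
    have hx : (sharp J T) x = J ((ContinuousLinearMap.adjoint T) (J x)) := rfl
    rw [hx, hJiso]
    calc ‖(ContinuousLinearMap.adjoint T) (J x)‖
        ≤ ‖ContinuousLinearMap.adjoint T‖ * ‖J x‖ := le_opNorm _ _
      _ = ‖T‖ * ‖x‖ := by rw [hJiso, ContinuousLinearMap.adjoint.norm_map]
  have hsharp_sub : ∀ S T : H →L[ℂ] H, sharp J (S - T) = sharp J S - sharp J T := by
    intro S T
    unfold sharp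
    rw [map_sub, ContinuousLinearMap.sub_comp, ContinuousLinearMap.comp_sub]
  -- sharp of an idempotent is idempotent
  have hsharp_idem : ∀ T : H →L[ℂ] H, T * T = T → sharp J T * sharp J T = sharp J T := by
    intro T hT
    have h1 : ContinuousLinearMap.adjoint T * ContinuousLinearMap.adjoint T
        = ContinuousLinearMap.adjoint T := by
      rw [ContinuousLinearMap.mul_def, ← ContinuousLinearMap.adjoint_comp,
        ContinuousLinearMap.mul_def] at *
      rw [hT]
    have : sharp J T = J * (ContinuousLinearMap.adjoint T * J) := rfl
    rw [this]
    exact sharp_ring hJ2 h1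
  set s : H →L[ℂ] H := sharp J Q with hs_def
  set s₀ : H →L[ℂ] H := sharp J Q₀ with hs₀_def
  have hs : s * s = s := hsharp_idem Q hQ
  have hs₀ : s₀ * s₀ = s₀ := hsharp_idem Q₀ hQ₀
  have hPP : P * P = P := by rw [hP]; exact idem_mul hQ hs hQn
  have hP₀P₀ : P₀ * P₀ = P₀ := by rw [hP₀]; exact idem_mul hQ₀ hs₀ hQ₀n
  -- Part 1
  have hid : P - P₀ = (Q - Q₀) - ((Q - Q₀) * s + Q₀ * (s - s₀)) := by
    rw [hP, hP₀]; noncomm_ring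
  have hnorm_s : ‖s‖ ≤ ‖Q‖ := hsharp_norm Q
  have hss₀ : ‖s - s₀‖ ≤ ‖Q - Q₀‖ := by
    rw [hs_def, hs₀_def, ← hsharp_sub]
    exact hsharp_norm _
  have hden : (1 : ℝ) ≤ 2 * (1 + ‖Q₀‖) := by nlinarith [norm_nonneg Q₀]
  have hQQ₀1 : ‖Q - Q₀‖ ≤ 1 := by
    have h2 : 1 / (2 * (1 + ‖Q₀‖)) ≤ 1 := by
      rw [div_le_one (by positivity)]; exact hden
    linarith
  have hQle : ‖Q‖ ≤ ‖Q₀‖ + 1 := by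
    calc ‖Q‖ = ‖Q₀ + (Q - Q₀)‖ := by rw [add_sub_cancel]
      _ ≤ ‖Q₀‖ + ‖Q - Q₀‖ := norm_add_le _ _
      _ ≤ ‖Q₀‖ + 1 := by linarith
  have part1 : ‖P - P₀‖ ≤ 2 * (1 + ‖Q₀‖) * ‖Q - Q₀‖ := by
    rw [hid]
    have h1 : ‖(Q - Q₀) * s‖ ≤ ‖Q - Q₀‖ * ‖s‖ := norm_mul_le _ _
    have h2 : ‖Q₀ * (s - s₀)‖ ≤ ‖Q₀‖ * ‖s - s₀‖ := norm_mul_le _ _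
    have h3 : ‖(Q - Q₀) - ((Q - Q₀) * s + Q₀ * (s - s₀))‖
        ≤ ‖Q - Q₀‖ + (‖(Q - Q₀) * s‖ + ‖Q₀ * (s - s₀)‖) :=
      (norm_sub_le _ _).trans (by gcongr; exact norm_add_le _ _)
    have h4 : ‖Q - Q₀‖ * ‖s‖ ≤ ‖Q - Q₀‖ * (‖Q₀‖ + 1) :=
      mul_le_mul_of_nonneg_left (hnorm_s.trans hQle) (norm_nonneg _)
    have h5 : ‖Q₀‖ * ‖s - s₀‖ ≤ ‖Q₀‖ * ‖Q - Q₀‖ :=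
      mul_le_mul_of_nonneg_left hss₀ (norm_nonneg _)
    nlinarith [norm_nonneg (Q - Q₀), norm_nonneg Q₀]
  -- Part 2
  have hpos : (0 : ℝ) < 2 * (1 + ‖Q₀‖) := by positivity
  have part2 : 2 * (1 + ‖Q₀‖) * ‖Q - Q₀‖ < 1 := by
    rw [lt_div_iff₀ hpos] at hclose
    linarith [hclose]
  -- Part 3
  have hPlt : ‖P - P₀‖ < 1 := lt_of_le_of_lt part1 part2
  set c : ℝ := ‖P - P₀‖ with hc_def
  have hc0 : 0 ≤ c := norm_nonneg _
  -- pointwise idempotence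
  have happly : ∀ (A B : H →L[ℂ] H) (x : H), (A * B) x = A (B x) := fun A B x => rfl
  have hfix : ∀ (A : H →L[ℂ] H), A * A = A → ∀ y ∈ LinearMap.range (A : H →ₗ[ℂ] H), A y = y := by
    intro A hA y hy
    obtain ⟨x, rfl⟩ := hy
    have := congrArg (fun f : H →L[ℂ] H => f x) hA
    simpa using this
  have hRP : R * P = P := by
    ext x
    rw [happly]
    refine hfix R hR (P x) ?_
    rw [hRr]
    exact LinearMap.mem_range_self _ x
  have hPR : P * R = R := by
    ext x
    rw [happly]
    refine hfix P hPP (R x) ?_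
    rw [← hRr]
    exact LinearMap.mem_range_self _ x
  have hR₀P₀ : R₀ * P₀ = P₀ := by
    ext x
    rw [happly]
    refine hfix R₀ hR₀ (P₀ x) ?_
    rw [hR₀r]
    exact LinearMap.mem_range_self _ x
  have hP₀R₀ : P₀ * R₀ = R₀ := by
    ext x
    rw [happly]
    refine hfix P₀ hP₀P₀ (R₀ x) ?_
    rw [← hR₀r]
    exact LinearMap.mem_range_self _ x
  -- norm bound for selfadjoint idempotents
  have hproj_le : ∀ (A : H →L[ℂ] H), A * A = A → IsSelfAdjoint A → ∀ x : H, ‖A x‖ ≤ ‖x‖ := by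
    intro A hA hAs x
    have hAA : A (A x) = A x := by
      have := congrArg (fun f : H →L[ℂ] H => f x) hA
      simpa using this
    have h1 : ⟪A (A x), x⟫ = ⟪A x, A x⟫ := by
      have := ContinuousLinearMap.adjoint_inner_left A x (A x)
      rw [hAs.adjoint_eq] at this
      exact this
    rw [hAA] at h1
    have h2 : ‖A x‖ ^ 2 = RCLike.re (K := ℂ) ⟪A x, x⟫ := by
      rw [h1]
      exact (inner_self_eq_norm_sq (𝕜 := ℂ) (A x)).symm
    have h3 : RCLike.re (K := ℂ) ⟪A x, x⟫ ≤ ‖A x‖ * ‖x‖ := re_inner_le_norm _ _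
    nlinarith [norm_nonneg (A x), norm_nonneg x]
  have hone_sub_idem : ∀ (A : H →L[ℂ] H), A * A = A → (1 - A) * (1 - A) = (1 - A) := by
    intro A hA
    calc (1 - A) * (1 - A) = 1 - A - A + A * A := by noncomm_ring
      _ = 1 - A := by rw [hA]; noncomm_ring
  have h1R : (1 - R) * (1 - R) = 1 - R := hone_sub_idem R hR
  have h1R₀ : (1 - R₀) * (1 - R₀) = 1 - R₀ := hone_sub_idem R₀ hR₀
  have h1Rsa : IsSelfAdjoint ((1 : H →L[ℂ] H) - R) := (IsSelfAdjoint.one (H →L[ℂ] H)).sub hRsa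
  have h1R₀sa : IsSelfAdjoint ((1 : H →L[ℂ] H) - R₀) := (IsSelfAdjoint.one (H →L[ℂ] H)).sub hR₀sa
  have hnR : ‖R‖ ≤ 1 :=
    ContinuousLinearMap.opNorm_le_bound _ zero_le_one fun x => by
      simpa using hproj_le R hR hRsa x
  have hnR₀ : ‖R₀‖ ≤ 1 :=
    ContinuousLinearMap.opNorm_le_bound _ zero_le_one fun x => by
      simpa using hproj_le R₀ hR₀ hR₀sa x
  have hn1R : ‖(1 : H →L[ℂ] H) - R‖ ≤ 1 :=
    ContinuousLinearMap.opNorm_le_bound _ zero_le_one fun x => by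
      simpa using hproj_le _ h1R h1Rsa x
  have hn1R₀ : ‖(1 : H →L[ℂ] H) - R₀‖ ≤ 1 :=
    ContinuousLinearMap.opNorm_le_bound _ zero_le_one fun x => by
      simpa using hproj_le _ h1R₀ h1R₀sa x
  -- key operator norm bounds
  have key1 : ‖(1 - R₀) * R‖ ≤ c := by
    have hidd : (1 - R₀) * (P - P₀) * R = (1 - R₀) * R := by
      calc (1 - R₀) * (P - P₀) * R
          = P * R - P₀ * R - R₀ * (P * R) + (R₀ * P₀) * R := by noncomm_ring
        _ = R - P₀ * R - R₀ * R + P₀ * R := by rw [hPR, hR₀P₀]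
        _ = (1 - R₀) * R := by noncomm_ring
    rw [← hidd]
    calc ‖(1 - R₀) * (P - P₀) * R‖ ≤ ‖(1 - R₀) * (P - P₀)‖ * ‖R‖ := norm_mul_le _ _
      _ ≤ (‖(1 : H →L[ℂ] H) - R₀‖ * ‖P - P₀‖) * ‖R‖ :=
          mul_le_mul_of_nonneg_right (norm_mul_le _ _) (norm_nonneg _)
      _ ≤ (1 * c) * 1 :=
          mul_le_mul (mul_le_mul hn1R₀ le_rfl (norm_nonneg _) zero_le_one) hnR
            (norm_nonneg _) (by positivity)
      _ = c := by ring
  have key2 : ‖(1 - R) * R₀‖ ≤ c := by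
    have hidd : (1 - R) * (P₀ - P) * R₀ = (1 - R) * R₀ := by
      calc (1 - R) * (P₀ - P) * R₀
          = P₀ * R₀ - P * R₀ - R * (P₀ * R₀) + (R * P) * R₀ := by noncomm_ring
        _ = R₀ - P * R₀ - R * R₀ + P * R₀ := by rw [hP₀R₀, hRP]
        _ = (1 - R) * R₀ := by noncomm_ring
    rw [← hidd]
    have hrev : ‖P₀ - P‖ = c := by rw [norm_sub_rev]
    calc ‖(1 - R) * (P₀ - P) * R₀‖ ≤ ‖(1 - R) * (P₀ - P)‖ * ‖R₀‖ := norm_mul_le _ _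
      _ ≤ (‖(1 : H →L[ℂ] H) - R‖ * ‖P₀ - P‖) * ‖R₀‖ :=
          mul_le_mul_of_nonneg_right (norm_mul_le _ _) (norm_nonneg _)
      _ ≤ (1 * c) * 1 :=
          mul_le_mul (mul_le_mul hn1R (le_of_eq hrev) (norm_nonneg _) zero_le_one) hnR₀
            (norm_nonneg _) (by positivity)
      _ = c := by ring
  -- ‖R(1-R₀)‖ = ‖(1-R₀)R‖ via adjoints
  have key1' : ‖R * (1 - R₀)‖ ≤ c := by
    have hadj : ContinuousLinearMap.adjoint ((1 - R₀) * R) = R * (1 - R₀) := by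
      rw [ContinuousLinearMap.mul_def, ContinuousLinearMap.adjoint_comp,
        hRsa.adjoint_eq, h1R₀sa.adjoint_eq, ContinuousLinearMap.mul_def]
    calc ‖R * (1 - R₀)‖ = ‖(1 - R₀) * R‖ := by
          rw [← hadj, ContinuousLinearMap.adjoint.norm_map]
      _ ≤ c := key1
  -- pointwise bound for R - R₀
  have hpt : ∀ x : H, ‖(R - R₀) x‖ ≤ c * ‖x‖ := by
    intro x
    set a : H := (R * (1 - R₀)) x with ha_def
    set b : H := ((1 - R) * R₀) x with hb_def
    have hRR₀x : (R * R₀) x = R (R₀ x) := rfl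
    have hdecomp : (R - R₀) x = a - b := by
      have : (R - R₀) = R * (1 - R₀) - (1 - R) * R₀ := by noncomm_ring
      rw [this]
      rfl
    have hab : ⟪a, b⟫ = 0 := by
      have ha' : a = R ((1 - R₀) x) := rfl
      have hb' : b = (1 - R) (R₀ x) := rfl
      rw [ha', hb']
      have h1 : ⟪R ((1 - R₀) x), (1 - R) (R₀ x)⟫
          = ⟪(1 - R₀) x, R ((1 - R) (R₀ x))⟫ := by
        have := ContinuousLinearMap.adjoint_inner_left R ((1 - R₀) x) ((1 - R) (R₀ x))
        rw [hRsa.adjoint_eq] at this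
        -- this : ⟪R ((1-R)(R₀ x)), (1-R₀)x⟫ = ⟪(1-R)(R₀ x), R ((1-R₀)x)⟫
        rw [← inner_conj_symm, ← this, inner_conj_symm]
      rw [h1]
      have h2 : R ((1 - R) (R₀ x)) = 0 := by
        have := congrArg (fun f : H →L[ℂ] H => f (R₀ x))
          (show R * (1 - R) = 0 by rw [mul_sub, mul_one, hR]; abel)
        simpa using this
      rw [h2, inner_zero_right]
    have hnorm : ‖a - b‖ ^ 2 = ‖a‖ ^ 2 + ‖b‖ ^ 2 := by
      rw [norm_sub_sq (𝕜 := ℂ), hab]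
      simp
    have h1x : (1 - R₀) ((1 - R₀) x) = (1 - R₀) x := by
      have := congrArg (fun f : H →L[ℂ] H => f x) h1R₀
      simpa using this
    have hR₀x : R₀ (R₀ x) = R₀ x := by
      have := congrArg (fun f : H →L[ℂ] H => f x) hR₀
      simpa using this
    have ha : ‖a‖ ≤ c * ‖(1 - R₀) x‖ := by
      have : a = (R * (1 - R₀)) ((1 - R₀) x) := by
        rw [ha_def, happly, happly, h1x]
      rw [this]
      exact (le_opNorm _ _).trans (mul_le_mul_of_nonneg_right key1' (norm_nonneg _))
    have hb : ‖b‖ ≤ c * ‖R₀ x‖ := by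
      have : b = ((1 - R) * R₀) (R₀ x) := by
        rw [hb_def, happly, happly, hR₀x]
      rw [this]
      exact (le_opNorm _ _).trans (mul_le_mul_of_nonneg_right key2 (norm_nonneg _))
    have hpyth : ‖R₀ x‖ ^ 2 + ‖(1 - R₀) x‖ ^ 2 = ‖x‖ ^ 2 := by
      have horth : ⟪R₀ x, (1 - R₀) x⟫ = 0 := by
        have h1 : ⟪R₀ x, (1 - R₀) x⟫ = ⟪x, R₀ ((1 - R₀) x)⟫ := by
          have := ContinuousLinearMap.adjoint_inner_left R₀ x ((1 - R₀) x)
          rw [hR₀sa.adjoint_eq] at this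
          rw [← inner_conj_symm, ← this, inner_conj_symm]
        rw [h1]
        have h2 : R₀ ((1 - R₀) x) = 0 := by
          have := congrArg (fun f : H →L[ℂ] H => f x)
            (show R₀ * (1 - R₀) = 0 by rw [mul_sub, mul_one, hR₀]; abel)
          simpa using this
        rw [h2, inner_zero_right]
      have hsum : R₀ x + (1 - R₀) x = x := by
        simp [ContinuousLinearMap.sub_apply]
      calc ‖R₀ x‖ ^ 2 + ‖(1 - R₀) x‖ ^ 2
          = ‖R₀ x + (1 - R₀) x‖ ^ 2 := by
            rw [norm_add_sq (𝕜 := ℂ), horth]; simp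
        _ = ‖x‖ ^ 2 := by rw [hsum]
    have hsq : ‖(R - R₀) x‖ ^ 2 ≤ (c * ‖x‖) ^ 2 := by
      rw [hdecomp, hnorm]
      have ha2 : ‖a‖ ^ 2 ≤ c ^ 2 * ‖(1 - R₀) x‖ ^ 2 := by nlinarith [norm_nonneg a, norm_nonneg ((1 - R₀) x)]
      have hb2 : ‖b‖ ^ 2 ≤ c ^ 2 * ‖R₀ x‖ ^ 2 := by nlinarith [norm_nonneg b, norm_nonneg (R₀ x)]
      nlinarith [hpyth]
    have h := Real.sqrt_le_sqrt hsq
    rwa [Real.sqrt_sq (norm_nonneg _), Real.sqrt_sq (by positivity)] at h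
  have part3 : ‖R - R₀‖ < 1 := by
    have : ‖R - R₀‖ ≤ c :=
      ContinuousLinearMap.opNorm_le_bound _ hc0 hpt
    exact lt_of_le_of_lt this hPlt
  -- Part 4
  have hinj : ∀ (A B : H →L[ℂ] H), A * A = A → ‖A - B‖ < 1 →
      ∀ x ∈ LinearMap.range (A : H →ₗ[ℂ] H), B x = 0 → x = 0 := by
    intro A B hA hlt x hx hBx
    have hAx : A x = x := hfix A hA x hx
    by_contra hne
    have h1 : ‖(A - B) x‖ = ‖x‖ := by
      rw [ContinuousLinearMap.sub_apply, hAx, hBx, sub_zero]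
    have h2 : ‖(A - B) x‖ ≤ ‖A - B‖ * ‖x‖ := le_opNorm _ _
    have h3 : (0 : ℝ) < ‖x‖ := norm_pos_iff.mpr hne
    nlinarith
  have hR₀R : ‖R₀ - R‖ < 1 := by rwa [norm_sub_rev]
  have rank_le : ∀ (A B : H →L[ℂ] H), A * A = A → ‖A - B‖ < 1 →
      Module.rank ℂ (LinearMap.range (A : H →ₗ[ℂ] H)) ≤ Module.rank ℂ (LinearMap.range (B : H →ₗ[ℂ] H)) := by
    intro A B hA hlt
    let f : (LinearMap.range (A : H →ₗ[ℂ] H)) →ₗ[ℂ] (LinearMap.range (B : H →ₗ[ℂ] H)) :=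
      LinearMap.codRestrict _
        ((B : H →ₗ[ℂ] H).comp (LinearMap.range (A : H →ₗ[ℂ] H)).subtype)
        (fun z => LinearMap.mem_range_self _ _)
    have hf : Function.Injective f := by
      rw [← LinearMap.ker_eq_bot, LinearMap.ker_eq_bot']
      intro z hz
      have hz' : B z.1 = 0 := by
        have := congrArg (Subtype.val) hz
        simpa [f] using this
      exact Subtype.ext (hinj A B hA hlt z.1 z.2 hz')
    exact LinearMap.rank_le_of_injective f hf
  have hrank : Module.rank ℂ (LinearMap.range (P : H →ₗ[ℂ] H)) = Module.rank ℂ (LinearMap.range (P₀ : H →ₗ[ℂ] H)) := by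
    rw [← hRr, ← hR₀r]
    exact le_antisymm (rank_le R R₀ hR part3) (rank_le R₀ R hR₀ hR₀R)
  exact ⟨part1, part2, part3, hrank⟩
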